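/- If γ : ℝ⁺ → ℝ⁺ is monotone nondecreasing and satisfies ∫₀^{R₀} γ(r)/r² dr < ∞, then the function extended by γ(0) := 0 is differentiable at 0 with derivative 0. -/

import Mathlib

open Set MeasureTheory Filter Topology

theorem dini_implies_differentiable_at_zero
    (γ : ℝ → ℝ) (R₀ : ℝ) (hR₀ : 0 < R₀)
    (hnonneg : ∀ r ∈ Set.Ioi (0:ℝ), 0 ≤ γ r)
    (hmono : MonotoneOn γ (Set.Ioi (0:ℝ)))
    (hDini : IntegrableOn (fun r => γ r / r ^ 2) (Set.Ioc 0 R₀) volume) :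
    HasDerivWithinAt (fun r => if r = 0 then 0 else γ r) 0 (Set.Ici (0:ℝ)) 0 := by
  set g : ℝ → ℝ := fun r => γ r / r ^ 2 with hg
  set F : ℝ → ℝ := fun t => ∫ s in Set.Ioc 0 t, g s with hF
  -- nonnegativity of g on (0, ∞)
  have hgnn : ∀ s ∈ Set.Ioi (0:ℝ), 0 ≤ g s := fun s hs =>
    div_nonneg (hnonneg s hs) (sq_nonneg s)
  -- key inequality
  have key : ∀ x : ℝ, 0 < x → x ≤ R₀ / 2 → γ x / x ≤ 4 * F (2 * x) := by
    intro x hx hx2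
    have h2x : (0:ℝ) < 2 * x := by linarith
    have hsub1 : Set.Ioc 0 (2 * x) ⊆ Set.Ioc 0 R₀ :=
      Set.Ioc_subset_Ioc le_rfl (by linarith)
    have hInt2 : IntegrableOn g (Set.Ioc 0 (2 * x)) volume := hDini.mono_set hsub1
    have hsub2 : Set.Ioc x (2 * x) ⊆ Set.Ioc 0 (2 * x) :=
      Set.Ioc_subset_Ioc (le_of_lt hx) le_rfl
    have hIntsub : IntegrableOn g (Set.Ioc x (2 * x)) volume := hInt2.mono_set hsub2
    set c : ℝ := γ x / (2 * x) ^ 2 with hc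
    have h1 : c * x ≤ ∫ s in Set.Ioc x (2 * x), g s := by
      have hmeas : volume (Set.Ioc x (2 * x)) = ENNReal.ofReal x := by
        rw [Real.volume_Ioc]; congr 1; ring
      have := setIntegral_ge_of_const_le (μ := volume) measurableSet_Ioc
        (by rw [hmeas]; exact ENNReal.ofReal_ne_top)
        (fun s hs => by
          have hs0 : (0:ℝ) < s := lt_trans hx hs.1
          have hγ : γ x ≤ γ s := hmono hx hs0 hs.1.le
          have hγx : 0 ≤ γ x := hnonneg x hx
          have hsq : s ^ 2 ≤ (2 * x) ^ 2 := by nlinarith [hs.2]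
          calc c = γ x / (2 * x) ^ 2 := rfl
            _ ≤ γ s / s ^ 2 :=
              div_le_div₀ (le_trans hγx hγ) hγ (by positivity) hsq)
        hIntsub
      rw [show volume.real (Set.Ioc x (2 * x)) = (volume (Set.Ioc x (2 * x))).toReal from rfl,
        hmeas, ENNReal.toReal_ofReal hx.le, smul_eq_mul] at this
      rw [mul_comm]; exact this
    have h2 : (∫ s in Set.Ioc x (2 * x), g s) ≤ F (2 * x) := by
      apply setIntegral_mono_set hInt2 ?_ (HasSubset.Subset.eventuallyLE hsub2)
      filter_upwards [ae_restrict_mem measurableSet_Ioc] with s hs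
      exact hgnn s hs.1
    have hcx : c * x = γ x / (4 * x) := by
      rw [hc]; field_simp; ring
    have : γ x / (4 * x) ≤ F (2 * x) := hcx ▸ le_trans h1 h2
    have hxx : γ x / x = 4 * (γ x / (4 * x)) := by field_simp
    rw [hxx]; linarith
  -- F (2 x) → 0 as x → 0⁺
  have hFtend : Tendsto (fun x => F (2 * x)) (𝓝[>] (0:ℝ)) (𝓝 0) := by
    have hμ : Tendsto (fun x : ℝ => volume (Set.Ioc (0:ℝ) (2 * x))) (𝓝[>] (0:ℝ)) (𝓝 0) := by
      have h1 : Tendsto (fun x : ℝ => ENNReal.ofReal (2 * x - 0)) (𝓝[>] (0:ℝ)) (𝓝 0) := by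
        have hcont : Continuous (fun x : ℝ => 2 * x - 0) := by continuity
        have : Tendsto (fun x : ℝ => 2 * x - 0) (𝓝[>] (0:ℝ)) (𝓝 0) := by
          simpa using (hcont.tendsto 0).mono_left nhdsWithin_le_nhds
        simpa only [Function.comp_def, ENNReal.ofReal_zero] using
          (ENNReal.continuous_ofReal.tendsto 0).comp this
      simpa [Real.volume_Ioc] using h1
    have hbase : Tendsto (fun x : ℝ =>
        ∫ s in Set.Ioc 0 (2 * x), g s ∂(volume.restrict (Set.Ioc 0 R₀)))
        (𝓝[>] (0:ℝ)) (𝓝 0) := by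
      apply hDini.tendsto_setIntegral_nhds_zero
      have hle : ∀ x : ℝ, (volume.restrict (Set.Ioc 0 R₀)) (Set.Ioc 0 (2 * x))
          ≤ volume (Set.Ioc (0:ℝ) (2 * x)) := fun x =>
        le_trans (Measure.restrict_apply_le _ _) le_rfl
      exact tendsto_of_tendsto_of_tendsto_of_le_of_le tendsto_const_nhds hμ
        (fun x => zero_le) fun x => hle x
    have heq : ∀ᶠ x in 𝓝[>] (0:ℝ),
        (∫ s in Set.Ioc 0 (2 * x), g s ∂(volume.restrict (Set.Ioc 0 R₀))) = F (2 * x) := by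
      filter_upwards [Ioo_mem_nhdsGT_of_mem (Set.left_mem_Ico.2 (by linarith : (0:ℝ) < R₀ / 2))]
        with x hx
      rw [Measure.restrict_restrict measurableSet_Ioc,
        Set.inter_eq_self_of_subset_left (Set.Ioc_subset_Ioc le_rfl (by linarith [hx.2]))]
    exact hbase.congr' heq
  -- conclude
  rw [hasDerivWithinAt_iff_tendsto_slope]
  have hset : Set.Ici (0:ℝ) \ {0} = Set.Ioi 0 := by
    ext x; simp [Set.mem_Ioi, lt_iff_le_and_ne, eq_comm, and_comm]
  rw [hset]
  have hslope : ∀ x ∈ Set.Ioi (0:ℝ),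
      slope (fun r => if r = 0 then 0 else γ r) 0 x = γ x / x := by
    intro x hx
    have hx0 : x ≠ 0 := ne_of_gt hx
    simp [slope, hx0, div_eq_inv_mul]
  have h4F : Tendsto (fun x => 4 * F (2 * x)) (𝓝[>] (0:ℝ)) (𝓝 0) := by
    simpa using hFtend.const_mul (4:ℝ)
  apply squeeze_zero' ?_ ?_ h4F
  · filter_upwards [self_mem_nhdsWithin] with x hx
    rw [hslope x hx]
    exact div_nonneg (hnonneg x hx) (le_of_lt hx)
  · filter_upwards [self_mem_nhdsWithin,
      Ioo_mem_nhdsGT_of_mem (Set.left_mem_Ico.2 (by linarith : (0:ℝ) < R₀ / 2))] with x hx hx2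
    rw [hslope x hx]
    exact key x hx (le_of_lt hx2.2)
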